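/- arXiv:2210.06171 — 4 statements merged into one kernel-verified Lean document; each statement's English description precedes it below -/
import Mathlib

section
/- Let n ≥ 1, let U be an orthogonal real n×n matrix, let D be a diagonal real n×n matrix with strictly positive diagonal entries, set H = U D Uᵀ, and let C be a symmetric positive semidefinite real n×n matrix. Let J ⊆ ℝ be an interval and A : J → M_n(ℝ) a matrix-valued function such that for every t ∈ J the spectral norm satisfies ‖A(t)‖ < 1 and A has derivative at t equal to A'(t) = −H · A(t) · S(t) · H², where S(t) = Σ_{n=0}^∞ A(t)ⁿ C (A(t)ⁿ)ᵀ. Then the function t ↦ ‖Uᵀ A(t) U D⁻¹‖_F² is nonincreasing on J, where ‖·‖_F denotes the Frobenius norm. -/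
open Matrix

/-- The spectral norm (ℓ²-operator norm) of a real square matrix. -/
noncomputable def specNorm {n : ℕ} (A : Matrix (Fin n) (Fin n) ℝ) : ℝ :=
  ‖Matrix.toEuclideanCLM (𝕜 := ℝ) A‖

attribute [local instance]
  Matrix.frobeniusSeminormedAddCommGroup
  Matrix.frobeniusNormedAddCommGroup
  Matrix.frobeniusNormedSpace

attribute [local instance]
  Matrix.frobeniusNormedRing
  Matrix.frobeniusNormedAlgebra

namespace LodoAux

variable {n : ℕ}

/-- Transpose as a continuous linear map. -/
noncomputable def tCLM (n : ℕ) : Matrix (Fin n) (Fin n) ℝ →L[ℝ] Matrix (Fin n) (Fin n) ℝ :=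
  LinearMap.toContinuousLinearMap (Matrix.transposeLinearEquiv (Fin n) (Fin n) ℝ ℝ).toLinearMap

@[simp] lemma tCLM_apply (M : Matrix (Fin n) (Fin n) ℝ) : tCLM n M = Mᵀ := rfl

/-- Trace as a continuous linear map. -/
noncomputable def trCLM (n : ℕ) : Matrix (Fin n) (Fin n) ℝ →L[ℝ] ℝ :=
  LinearMap.toContinuousLinearMap (Matrix.traceLinearMap (Fin n) ℝ ℝ)

@[simp] lemma trCLM_apply (M : Matrix (Fin n) (Fin n) ℝ) : trCLM n M = M.trace := rfl

/-- Quadratic form `M ↦ y ⬝ᵥ M *ᵥ x` as a continuous linear map. -/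
noncomputable def qfCLM (n : ℕ) (y x : Fin n → ℝ) : Matrix (Fin n) (Fin n) ℝ →L[ℝ] ℝ :=
  LinearMap.toContinuousLinearMap
    { toFun := fun M => y ⬝ᵥ (M *ᵥ x)
      map_add' := by intro M N; simp [Matrix.add_mulVec, dotProduct_add]
      map_smul' := by intro r M; simp [Matrix.smul_mulVec, dotProduct_smul] }

@[simp] lemma qfCLM_apply (y x : Fin n → ℝ) (M : Matrix (Fin n) (Fin n) ℝ) :
    qfCLM n y x M = y ⬝ᵥ (M *ᵥ x) := rfl

lemma posSemidef_tsum {f : ℕ → Matrix (Fin n) (Fin n) ℝ} (hf : ∀ k, (f k).PosSemidef) :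
    (∑' k, f k).PosSemidef := by
  by_cases hs : Summable f
  · refine Matrix.posSemidef_iff_dotProduct_mulVec.mpr ⟨?_, ?_⟩
    · show (∑' k, f k)ᴴ = _
      rw [Matrix.conjTranspose_eq_transpose_of_trivial]
      have h := ((tCLM n).map_tsum hs).symm
      simp only [tCLM_apply] at h
      rw [← h]
      refine tsum_congr fun k => ?_
      have := (hf k).1
      rwa [Matrix.IsHermitian, Matrix.conjTranspose_eq_transpose_of_trivial] at this
    · intro x
      have h := ((qfCLM n (star x) x).map_tsum hs).symm
      simp only [qfCLM_apply] at h
      rw [← h]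
      exact tsum_nonneg fun k => (hf k).dotProduct_mulVec_nonneg x
  · rw [tsum_eq_zero_of_not_summable hs]
    exact Matrix.PosSemidef.zero

lemma trace_psd_nonneg {M : Matrix (Fin n) (Fin n) ℝ} (hM : M.PosSemidef) : 0 ≤ M.trace := by
  rw [Matrix.trace]
  refine Finset.sum_nonneg fun i _ => ?_
  have h := hM.dotProduct_mulVec_nonneg (Pi.single i 1)
  simpa [Matrix.diag, dotProduct, Matrix.mulVec, Pi.single_apply, Finset.sum_ite_eq,
    mul_comm] using h

open scoped MatrixOrder in
lemma psd_eq_ct_mul_self {P : Matrix (Fin n) (Fin n) ℝ} (hP : P.PosSemidef) :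
    ∃ E : Matrix (Fin n) (Fin n) ℝ, P = Eᴴ * E :=
  CStarAlgebra.nonneg_iff_eq_star_mul_self.mp (Matrix.nonneg_iff_posSemidef.mpr hP)

lemma trace_psd_mul_nonneg {P Q : Matrix (Fin n) (Fin n) ℝ} (hP : P.PosSemidef)
    (hQ : Q.PosSemidef) : 0 ≤ (P * Q).trace := by
  obtain ⟨E, rfl⟩ := psd_eq_ct_mul_self hP
  obtain ⟨F, rfl⟩ := psd_eq_ct_mul_self hQ
  have h1 : Eᴴ * E * (Fᴴ * F) = (Eᴴ * (E * Fᴴ)) * F := by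
    simp only [Matrix.mul_assoc]
  have h2 : F * (Eᴴ * (E * Fᴴ)) = (E * Fᴴ)ᴴ * (E * Fᴴ) := by
    simp only [Matrix.conjTranspose_mul, Matrix.conjTranspose_conjTranspose, Matrix.mul_assoc]
  rw [h1, Matrix.trace_mul_comm, h2]
  exact trace_psd_nonneg (Matrix.posSemidef_conjTranspose_mul_self _)

end LodoAux

open LodoAux

/-- Along the continuous-time Hessian-learning flow
`dA/dt = −H A S(t) H²` with `S(t) = Σₙ A(t)ⁿ C (A(t)ⁿ)ᵀ`, for `H = U D Uᵀ` with `U`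
orthogonal and `D` a positive diagonal matrix and `C` symmetric PSD, the rescaled squared
Frobenius error `‖Uᵀ A(t) U D⁻¹‖_F²` is nonincreasing on the interval `J`. -/
theorem lodo_flow_error_nonincreasing (n : ℕ) (hn : 1 ≤ n)
    (U : Matrix (Fin n) (Fin n) ℝ) (hU : U * Uᵀ = 1)
    (d : Fin n → ℝ) (hd : ∀ i, 0 < d i)
    (D : Matrix (Fin n) (Fin n) ℝ) (hD : D = Matrix.diagonal d)
    (H : Matrix (Fin n) (Fin n) ℝ) (hH : H = U * D * Uᵀ)
    (C : Matrix (Fin n) (Fin n) ℝ) (hC : C.PosSemidef)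
    (J : Set ℝ) (hJ : J.OrdConnected)
    (A : ℝ → Matrix (Fin n) (Fin n) ℝ)
    (hAnorm : ∀ t ∈ J, specNorm (A t) < 1)
    (hAderiv : ∀ t ∈ J,
      HasDerivAt A
        (-(H * A t * (∑' k : ℕ, (A t) ^ k * C * ((A t) ^ k)ᵀ) * H ^ 2)) t) :
    AntitoneOn (fun t => ((Uᵀ * A t * U * D⁻¹)ᵀ * (Uᵀ * A t * U * D⁻¹)).trace) J := by
  classical
  have hU' : Uᵀ * U = 1 := mul_eq_one_comm.mp hU
  have e1 : ∀ X : Matrix (Fin n) (Fin n) ℝ, Uᵀ * (U * X) = X := fun X => by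
    rw [← Matrix.mul_assoc, hU', Matrix.one_mul]
  have e2 : ∀ X : Matrix (Fin n) (Fin n) ℝ, U * (Uᵀ * X) = X := fun X => by
    rw [← Matrix.mul_assoc, hU, Matrix.one_mul]
  have hdet : IsUnit D.det := by
    rw [hD, Matrix.det_diagonal]
    exact (Finset.prod_pos fun i _ => hd i).ne'.isUnit
  have hDD : D * D⁻¹ = 1 := Matrix.mul_nonsing_inv D hdet
  have hDt : Dᵀ = D := by rw [hD, Matrix.diagonal_transpose]
  have hDit : (D⁻¹)ᵀ = D⁻¹ := by rw [Matrix.transpose_nonsing_inv, hDt]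
  have hDpsd : D.PosSemidef := by
    rw [hD]; exact Matrix.posSemidef_diagonal_iff.mpr fun i => (hd i).le
  have key : ∀ t ∈ J, ∃ v : ℝ,
      HasDerivAt (fun t => ((Uᵀ * A t * U * D⁻¹)ᵀ * (Uᵀ * A t * U * D⁻¹)).trace) v t ∧ v ≤ 0 := by
    intro t ht
    have hA := hAderiv t ht
    set S := ∑' k : ℕ, (A t) ^ k * C * ((A t) ^ k)ᵀ with hS
    set A' := -(H * A t * S * H ^ 2) with hA'def
    have h1 : HasDerivAt (fun s => Uᵀ * A s * U * D⁻¹) (Uᵀ * A' * U * D⁻¹) t :=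
      ((hA.const_mul Uᵀ).mul_const U).mul_const D⁻¹
    have h2 : HasDerivAt (fun s => (Uᵀ * A s * U * D⁻¹)ᵀ) ((Uᵀ * A' * U * D⁻¹)ᵀ) t := by
      have := (tCLM n).hasFDerivAt.comp_hasDerivAt t h1
      exact this
    have h3 := h2.mul h1
    have h4 := (trCLM n).hasFDerivAt.comp_hasDerivAt t h3
    simp only [trCLM_apply, Function.comp_def] at h4
    refine ⟨_, h4, ?_⟩
    -- now the inequality
    have hSpsd : S.PosSemidef := by
      rw [hS]
      refine posSemidef_tsum fun k => ?_
      have := hC.mul_mul_conjTranspose_same ((A t) ^ k)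
      rwa [Matrix.conjTranspose_eq_transpose_of_trivial] at this
    set B := Uᵀ * A t * U with hB
    set Q := Uᵀ * S * U with hQ
    have hQpsd : Q.PosSemidef := by
      have := hSpsd.conjTranspose_mul_mul_same U
      rwa [Matrix.conjTranspose_eq_transpose_of_trivial] at this
    have hPpsd : (Bᵀ * D * B).PosSemidef := by
      have := hDpsd.conjTranspose_mul_mul_same B
      rwa [Matrix.conjTranspose_eq_transpose_of_trivial] at this
    have hMM' : (Uᵀ * A t * U * D⁻¹)ᵀ * (Uᵀ * A' * U * D⁻¹)
        = -(D⁻¹ * (Bᵀ * D * B * Q * D)) := by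
      simp only [hA'def, hB, hQ, hH, pow_two, Matrix.transpose_mul, Matrix.transpose_transpose,
        hDit, Matrix.mul_neg, Matrix.neg_mul, neg_inj, Matrix.mul_assoc, e1, e2, hDD,
        Matrix.mul_one]
    have htr : ((Uᵀ * A t * U * D⁻¹)ᵀ * (Uᵀ * A' * U * D⁻¹)).trace
        = -((Bᵀ * D * B * Q).trace) := by
      rw [hMM', Matrix.trace_neg, neg_inj, Matrix.trace_mul_comm]
      rw [Matrix.mul_assoc (Bᵀ * D * B * Q) D D⁻¹, hDD, Matrix.mul_one]
    have htr2 : ((Uᵀ * A' * U * D⁻¹)ᵀ * (Uᵀ * A t * U * D⁻¹)).trace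
        = ((Uᵀ * A t * U * D⁻¹)ᵀ * (Uᵀ * A' * U * D⁻¹)).trace := by
      rw [← Matrix.trace_transpose ((Uᵀ * A' * U * D⁻¹)ᵀ * (Uᵀ * A t * U * D⁻¹)),
        Matrix.transpose_mul, Matrix.transpose_transpose]
    have hnn : 0 ≤ ((Bᵀ * D * B) * Q).trace := trace_psd_mul_nonneg hPpsd hQpsd
    show ((Uᵀ * A' * U * D⁻¹)ᵀ * (B * D⁻¹) + (B * D⁻¹)ᵀ * (Uᵀ * A' * U * D⁻¹)).trace ≤ 0
    rw [Matrix.trace_add, htr2, htr]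
    have : (Bᵀ * D * B * Q).trace = ((Bᵀ * D * B) * Q).trace := by
      rw [Matrix.mul_assoc]
    linarith [this ▸ hnn]
  have hconv : Convex ℝ J := convex_iff_ordConnected.mpr hJ
  refine antitoneOn_of_deriv_nonpos hconv ?_ ?_ ?_
  · exact fun t ht => (key t ht).choose_spec.1.continuousAt.continuousWithinAt
  · exact fun t ht =>
      (key t (interior_subset ht)).choose_spec.1.differentiableAt.differentiableWithinAt
  · intro t ht
    obtain ⟨v, hv, hv0⟩ := key t (interior_subset ht)
    rw [hv.deriv]
    exact hv0
end

section
/- Under the coupled-dynamics setup, for every Δt ∈ ℕ and every τ with t₀ ≤ τ ≤ t₀ + Δt + 1, the deviation satisfies ‖b_τ − b'_τ‖ ≤ ε_A(Δt) · Σ_{τ₁ = t₀}^{τ − 1} ‖A'_{t₀}‖^{τ − 1 − τ₁} · ‖b_{τ₁}‖. -/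
open Matrix Finset

/-- The Euclidean norm of a real vector. -/
noncomputable def evNorm {n : ℕ} (v : Fin n → ℝ) : ℝ :=
  Real.sqrt (∑ i, v i ^ 2)

/-- `ε_A(Δt) = max_{t₀ ≤ τ ≤ t₀+Δt} ‖A_τ − A'_{t₀}‖` (spectral norm). -/
noncomputable def epsA {n : ℕ} (t₀ : ℕ)
    (A A' : ℕ → Matrix (Fin n) (Fin n) ℝ) (Δt : ℕ) : ℝ :=
  (Finset.Icc t₀ (t₀ + Δt)).sup'
    (Finset.nonempty_Icc.mpr (Nat.le_add_right _ _))
    (fun τ => specNorm (A τ - A' t₀))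

/-- `ε_b(Δt) = max_{t₀ ≤ τ ≤ t₀+Δt} ‖b_τ − b'_τ‖` (Euclidean norm). -/
noncomputable def epsB {n : ℕ} (t₀ : ℕ)
    (b b' : ℕ → (Fin n → ℝ)) (Δt : ℕ) : ℝ :=
  (Finset.Icc t₀ (t₀ + Δt)).sup'
    (Finset.nonempty_Icc.mpr (Nat.le_add_right _ _))
    (fun τ => evNorm (b τ - b' τ))

lemma evNorm_eq {n : ℕ} (v : Fin n → ℝ) :
    evNorm v = ‖(WithLp.equiv 2 (Fin n → ℝ)).symm v‖ := by
  simp [evNorm, EuclideanSpace.norm_eq, Real.norm_eq_abs, sq_abs]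

lemma evNorm_nonneg {n : ℕ} (v : Fin n → ℝ) : 0 ≤ evNorm v := by
  rw [evNorm_eq]; exact norm_nonneg _

lemma evNorm_add_le {n : ℕ} (u v : Fin n → ℝ) :
    evNorm (u + v) ≤ evNorm u + evNorm v := by
  simp only [evNorm_eq]
  rw [show (WithLp.equiv 2 (Fin n → ℝ)).symm (u + v)
      = (WithLp.equiv 2 (Fin n → ℝ)).symm u + (WithLp.equiv 2 (Fin n → ℝ)).symm v from rfl]
  exact norm_add_le _ _

lemma evNorm_mulVec_le {n : ℕ} (A : Matrix (Fin n) (Fin n) ℝ) (v : Fin n → ℝ) :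
    evNorm (A *ᵥ v) ≤ specNorm A * evNorm v := by
  simp only [evNorm_eq, WithLp.equiv_symm_apply, ← Matrix.toEuclideanCLM_toLp (𝕜 := ℝ)]
  exact (Matrix.toEuclideanCLM (𝕜 := ℝ) A).le_opNorm _

/-- Pointwise forward deviation bound for the coupled dynamics. -/
theorem lodo_deviation_pointwise_bound
    (n : ℕ) (hn : 1 ≤ n) (t₀ : ℕ) (α : ℝ) (hα : 0 < α)
    (H : Matrix (Fin n) (Fin n) ℝ) (s : ℕ → (Fin n → ℝ))
    (bmax : ℝ) (hbmax : 0 < bmax)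
    (A A' : ℕ → Matrix (Fin n) (Fin n) ℝ) (b b' : ℕ → (Fin n → ℝ))
    (hb0 : b t₀ = 0)
    (hbrec : ∀ t, t₀ ≤ t → b (t + 1) = A t *ᵥ b t - s t)
    (hArec : ∀ t, t₀ ≤ t →
      A (t + 1) = A t - α • (H * vecMulVec (b (t + 1)) (b t) * H ^ 2))
    (hA'0 : A' t₀ = A t₀) (hb'0 : b' t₀ = 0)
    (hb'rec : ∀ t, t₀ ≤ t → b' (t + 1) = A' t₀ *ᵥ b' t - s t)
    (hA'rec : ∀ t, t₀ ≤ t →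
      A' (t + 1) = A' t - α • (H * vecMulVec (b' (t + 1)) (b' t) * H ^ 2))
    (hAnorm : specNorm (A' t₀) < 1)
    (hb'bound : ∀ t, t₀ ≤ t → evNorm (b' t) ≤ bmax) :
    ∀ Δt : ℕ, ∀ τ, t₀ ≤ τ → τ ≤ t₀ + Δt + 1 →
      evNorm (b τ - b' τ) ≤
        epsA t₀ A A' Δt *
          ∑ τ₁ ∈ Finset.Ico t₀ τ, specNorm (A' t₀) ^ (τ - 1 - τ₁) * evNorm (b τ₁) := by
  intro Δt
  have hεA_nonneg : 0 ≤ epsA t₀ A A' Δt := by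
    unfold epsA specNorm
    exact le_trans (norm_nonneg _)
      (Finset.le_sup' (fun τ => ‖Matrix.toEuclideanCLM (𝕜 := ℝ) (A τ - A' t₀)‖)
        (Finset.mem_Icc.mpr ⟨le_refl t₀, Nat.le_add_right _ _⟩))
  have hA'_nonneg : (0:ℝ) ≤ specNorm (A' t₀) := norm_nonneg _
  intro τ hτ₀
  induction τ, hτ₀ using Nat.le_induction with
  | base =>
    intro _
    simp [hb0, hb'0, evNorm]
  | succ τ hτ ih =>
    intro hle
    have hτtop : τ ≤ t₀ + Δt := by omega
    have ih' := ih (by omega)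
    have hεA_mem : specNorm (A τ - A' t₀) ≤ epsA t₀ A A' Δt := by
      unfold epsA
      exact Finset.le_sup' (fun τ => specNorm (A τ - A' t₀))
        (Finset.mem_Icc.mpr ⟨hτ, hτtop⟩)
    have hsplit : b (τ + 1) - b' (τ + 1)
        = (A τ - A' t₀) *ᵥ b τ + A' t₀ *ᵥ (b τ - b' τ) := by
      rw [hbrec τ hτ, hb'rec τ hτ, Matrix.sub_mulVec, Matrix.mulVec_sub]
      abel
    have h1 : evNorm (b (τ+1) - b' (τ+1))
        ≤ specNorm (A τ - A' t₀) * evNorm (b τ)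
          + specNorm (A' t₀) * evNorm (b τ - b' τ) := by
      rw [hsplit]
      exact (evNorm_add_le _ _).trans
        (add_le_add (evNorm_mulVec_le _ _) (evNorm_mulVec_le _ _))
    have h2 : evNorm (b (τ+1) - b' (τ+1))
        ≤ epsA t₀ A A' Δt * evNorm (b τ)
          + specNorm (A' t₀) * (epsA t₀ A A' Δt *
            ∑ τ₁ ∈ Finset.Ico t₀ τ, specNorm (A' t₀) ^ (τ - 1 - τ₁) * evNorm (b τ₁)) := by
      refine h1.trans (add_le_add ?_ ?_)
      · exact mul_le_mul_of_nonneg_right hεA_mem (evNorm_nonneg _)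
      · exact mul_le_mul_of_nonneg_left ih' hA'_nonneg
    refine h2.trans (le_of_eq ?_)
    rw [Finset.sum_Ico_succ_top hτ]
    have hsum : specNorm (A' t₀) *
        ∑ τ₁ ∈ Finset.Ico t₀ τ, specNorm (A' t₀) ^ (τ - 1 - τ₁) * evNorm (b τ₁)
        = ∑ τ₁ ∈ Finset.Ico t₀ τ, specNorm (A' t₀) ^ (τ + 1 - 1 - τ₁) * evNorm (b τ₁) := by
      rw [Finset.mul_sum]
      refine Finset.sum_congr rfl fun τ₁ hτ₁ => ?_
      obtain ⟨_, hlt⟩ := Finset.mem_Ico.mp hτ₁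
      have : τ + 1 - 1 - τ₁ = (τ - 1 - τ₁) + 1 := by omega
      rw [this, pow_succ]
      ring
    have htop : τ + 1 - 1 - τ = 0 := by omega
    rw [mul_add, ← hsum, htop, pow_zero, one_mul]
    ring
end

section
/- Under the coupled-dynamics setup, for every Δt ∈ ℕ such that ε_A(Δt) < 1 − ‖A'_{t₀}‖, the maximum deviation in b satisfies the forward bound ε_b(Δt + 1) ≤ ε_A(Δt) · b_max / (1 − ‖A'_{t₀}‖ − ε_A(Δt)). -/
open Matrix Finset

/-- Forward bound: the maximum deviation in `b` is controlled by the
maximum drift of `A`. -/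
theorem lodo_forward_bound
    (n : ℕ) (hn : 1 ≤ n) (t₀ : ℕ) (α : ℝ) (hα : 0 < α)
    (H : Matrix (Fin n) (Fin n) ℝ) (s : ℕ → (Fin n → ℝ))
    (bmax : ℝ) (hbmax : 0 < bmax)
    (A A' : ℕ → Matrix (Fin n) (Fin n) ℝ) (b b' : ℕ → (Fin n → ℝ))
    (hb0 : b t₀ = 0)
    (hbrec : ∀ t, t₀ ≤ t → b (t + 1) = A t *ᵥ b t - s t)
    (hArec : ∀ t, t₀ ≤ t →
      A (t + 1) = A t - α • (H * vecMulVec (b (t + 1)) (b t) * H ^ 2))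
    (hA'0 : A' t₀ = A t₀) (hb'0 : b' t₀ = 0)
    (hb'rec : ∀ t, t₀ ≤ t → b' (t + 1) = A' t₀ *ᵥ b' t - s t)
    (hA'rec : ∀ t, t₀ ≤ t →
      A' (t + 1) = A' t - α • (H * vecMulVec (b' (t + 1)) (b' t) * H ^ 2))
    (hAnorm : specNorm (A' t₀) < 1)
    (hb'bound : ∀ t, t₀ ≤ t → evNorm (b' t) ≤ bmax) :
    ∀ Δt : ℕ, epsA t₀ A A' Δt < 1 - specNorm (A' t₀) →
      epsB t₀ b b' (Δt + 1) ≤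
        epsA t₀ A A' Δt * bmax / (1 - specNorm (A' t₀) - epsA t₀ A A' Δt) := by

  intro Δt hΔ
  set a := specNorm (A' t₀) with ha
  set ε := epsA t₀ A A' Δt with hε
  have hεle : ∀ τ, t₀ ≤ τ → τ ≤ t₀ + Δt → specNorm (A τ - A' t₀) ≤ ε := by
    intro τ h1 h2
    exact Finset.le_sup' (fun τ => specNorm (A τ - A' t₀)) (Finset.mem_Icc.mpr ⟨h1, h2⟩)
  have hεnn : 0 ≤ ε := by
    have h0 : specNorm (A t₀ - A' t₀) = 0 := by
      rw [hA'0, sub_self, specNorm, map_zero, norm_zero]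
    have := hεle t₀ le_rfl (Nat.le_add_right _ _)
    linarith
  have hden : 0 < 1 - a - ε := by linarith
  set M := ε * bmax / (1 - a - ε) with hM
  have hMnn : 0 ≤ M := by
    apply div_nonneg (mul_nonneg hεnn hbmax.le) hden.le
  have hann : 0 ≤ a := norm_nonneg _
  -- key induction
  have key : ∀ k, k ≤ Δt + 1 → evNorm (b (t₀ + k) - b' (t₀ + k)) ≤ M := by
    intro k
    induction k with
    | zero =>
      intro _
      simp only [Nat.add_zero, hb0, hb'0, sub_zero]
      have : evNorm (0 : Fin n → ℝ) = 0 := by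
        rw [evNorm_eq]; simp
      rw [this]; exact hMnn
    | succ k ih =>
      intro hk
      have hk' : k ≤ Δt := Nat.lt_succ_iff.mp hk
      have hIH : evNorm (b (t₀ + k) - b' (t₀ + k)) ≤ M := ih (le_trans hk' (Nat.le_succ _))
      have htle : t₀ ≤ t₀ + k := Nat.le_add_right _ _
      have hdecomp :
          b (t₀ + k + 1) - b' (t₀ + k + 1) =
            A' t₀ *ᵥ (b (t₀ + k) - b' (t₀ + k)) + (A (t₀ + k) - A' t₀) *ᵥ b (t₀ + k) := by
        rw [hbrec _ htle, hb'rec _ htle, Matrix.mulVec_sub, Matrix.sub_mulVec]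
        abel
      have hbt : evNorm (b (t₀ + k)) ≤ bmax + M := by
        have : b (t₀ + k) = b' (t₀ + k) + (b (t₀ + k) - b' (t₀ + k)) := by abel
        rw [this]
        calc evNorm (b' (t₀ + k) + (b (t₀ + k) - b' (t₀ + k)))
            ≤ evNorm (b' (t₀ + k)) + evNorm (b (t₀ + k) - b' (t₀ + k)) := evNorm_add_le _ _
          _ ≤ bmax + M := add_le_add (hb'bound _ htle) hIH
      have hεk : specNorm (A (t₀ + k) - A' t₀) ≤ ε :=
        hεle _ htle (by omega)
      have h1 : evNorm (A' t₀ *ᵥ (b (t₀ + k) - b' (t₀ + k))) ≤ a * M := by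
        calc evNorm (A' t₀ *ᵥ (b (t₀ + k) - b' (t₀ + k)))
            ≤ a * evNorm (b (t₀ + k) - b' (t₀ + k)) := evNorm_mulVec_le _ _
          _ ≤ a * M := by nlinarith [evNorm_nonneg (b (t₀ + k) - b' (t₀ + k))]
      have h2 : evNorm ((A (t₀ + k) - A' t₀) *ᵥ b (t₀ + k)) ≤ ε * (bmax + M) := by
        calc evNorm ((A (t₀ + k) - A' t₀) *ᵥ b (t₀ + k))
            ≤ specNorm (A (t₀ + k) - A' t₀) * evNorm (b (t₀ + k)) := evNorm_mulVec_le _ _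
          _ ≤ ε * (bmax + M) := by nlinarith [evNorm_nonneg (b (t₀ + k))]
      have hMeq : M * (1 - a - ε) = ε * bmax := by
        rw [hM, div_mul_cancel₀ _ hden.ne']
      have : evNorm (b (t₀ + k + 1) - b' (t₀ + k + 1)) ≤ a * M + ε * (bmax + M) := by
        rw [hdecomp]
        exact le_trans (evNorm_add_le _ _) (add_le_add h1 h2)
      have hfin : a * M + ε * (bmax + M) ≤ M := by nlinarith
      exact le_trans this hfin
  -- conclude
  apply Finset.sup'_le
  intro τ hτ
  rw [Finset.mem_Icc] at hτ
  obtain ⟨k, rfl⟩ := Nat.exists_eq_add_of_le hτ.1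
  exact key k (by omega)
end

section
/- Under the coupled-dynamics setup, for every Δt ∈ ℕ satisfying Δt + 1 ≤ (4/27)(1 − ‖A'_{t₀}‖)/(α ‖H‖³ b_max²), the maximum drift of A is bounded by ε_A(Δt) ≤ (9/4) α ‖H‖³ b_max² (Δt + 1), and in particular ε_A(Δt) ≤ (1/3)(1 − ‖A'_{t₀}‖). -/
open Matrix Finset

set_option synthInstance.maxHeartbeats 1000000
set_option maxHeartbeats 1000000

lemma specNorm_nonneg {n : ℕ} (A : Matrix (Fin n) (Fin n) ℝ) : 0 ≤ specNorm A :=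
  norm_nonneg _

lemma specNorm_zero {n : ℕ} : specNorm (0 : Matrix (Fin n) (Fin n) ℝ) = 0 := by
  rw [specNorm, map_zero, norm_zero]

lemma specNorm_sub_le {n : ℕ} (A B : Matrix (Fin n) (Fin n) ℝ) :
    specNorm (A - B) ≤ specNorm A + specNorm B := by
  rw [specNorm, specNorm, specNorm, map_sub]
  exact norm_sub_le _ _

lemma evNorm_sub_le {n : ℕ} (u v : Fin n → ℝ) :
    evNorm (u - v) ≤ evNorm u + evNorm v := by
  rw [evNorm_eq, evNorm_eq, evNorm_eq, WithLp.equiv_symm_apply, WithLp.toLp_sub]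
  exact norm_sub_le _ _

lemma specNorm_mul_le {n : ℕ} (A B : Matrix (Fin n) (Fin n) ℝ) :
    specNorm (A * B) ≤ specNorm A * specNorm B := by
  rw [specNorm, specNorm, specNorm, _root_.map_mul]
  exact norm_mul_le _ _

lemma specNorm_smul {n : ℕ} (c : ℝ) (A : Matrix (Fin n) (Fin n) ℝ) :
    specNorm (c • A) = |c| * specNorm A := by
  rw [specNorm, specNorm, _root_.map_smul]
  rw [norm_smul c (Matrix.toEuclideanCLM (𝕜 := ℝ) A), Real.norm_eq_abs]

lemma specNorm_sq_le {n : ℕ} (A : Matrix (Fin n) (Fin n) ℝ) :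
    specNorm (A ^ 2) ≤ specNorm A ^ 2 := by
  rw [sq, sq]; exact specNorm_mul_le A A

lemma specNorm_vecMulVec_le {n : ℕ} (u v : Fin n → ℝ) :
    specNorm (vecMulVec u v) ≤ evNorm u * evNorm v := by
  rw [specNorm]
  apply ContinuousLinearMap.opNorm_le_bound _ (mul_nonneg (evNorm_nonneg u) (evNorm_nonneg v))
  intro x
  have hx : x = (WithLp.equiv 2 (Fin n → ℝ)).symm ((WithLp.equiv 2 (Fin n → ℝ)) x) := rfl
  rw [hx]
  change ‖(WithLp.equiv 2 (Fin n → ℝ)).symm (vecMulVec u v *ᵥ (WithLp.equiv 2 (Fin n → ℝ)) x)‖ ≤ _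
  set w : Fin n → ℝ := (WithLp.equiv 2 (Fin n → ℝ)) x with hw
  have hmv : vecMulVec u v *ᵥ w = (v ⬝ᵥ w) • u := by
    ext i
    simp only [Matrix.vecMulVec, Matrix.mulVec, dotProduct, Matrix.of_apply,
      Pi.smul_apply, smul_eq_mul, mul_assoc]
    rw [← Finset.mul_sum, mul_comm]
  rw [hmv]
  have h1 : ‖(WithLp.equiv 2 (Fin n → ℝ)).symm ((v ⬝ᵥ w) • u)‖ = |v ⬝ᵥ w| * evNorm u := by
    rw [evNorm_eq, WithLp.equiv_symm_apply, WithLp.toLp_smul, norm_smul, Real.norm_eq_abs]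
  rw [h1]
  have hcs : |v ⬝ᵥ w| ≤ evNorm v * evNorm w := by
    have := abs_real_inner_le_norm ((WithLp.equiv 2 (Fin n → ℝ)).symm v)
      ((WithLp.equiv 2 (Fin n → ℝ)).symm w)
    rw [← evNorm_eq, ← evNorm_eq] at this
    refine le_trans (le_of_eq ?_) this
    congr 1
    rw [EuclideanSpace.inner_eq_star_dotProduct, WithLp.equiv_symm_apply, WithLp.ofLp_toLp,
      WithLp.ofLp_toLp, star_trivial, dotProduct_comm]
  have hwx : evNorm w = ‖x‖ := by rw [evNorm_eq]; rfl
  calc |v ⬝ᵥ w| * evNorm u ≤ (evNorm v * evNorm w) * evNorm u :=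
        mul_le_mul_of_nonneg_right hcs (evNorm_nonneg u)
    _ = evNorm u * evNorm v * ‖x‖ := by rw [hwx]; ring

/-- Drift bound: for short enough time horizons the maximum drift of
`A` is at most `(9/4) α ‖H‖³ b_max² (Δt+1)`, and in particular at most
`(1/3)(1 − ‖A'_{t₀}‖)`. -/
theorem lodo_drift_bound
    (n : ℕ) (hn : 1 ≤ n) (t₀ : ℕ) (α : ℝ) (hα : 0 < α)
    (H : Matrix (Fin n) (Fin n) ℝ) (s : ℕ → (Fin n → ℝ))
    (bmax : ℝ) (hbmax : 0 < bmax)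
    (A A' : ℕ → Matrix (Fin n) (Fin n) ℝ) (b b' : ℕ → (Fin n → ℝ))
    (hb0 : b t₀ = 0)
    (hbrec : ∀ t, t₀ ≤ t → b (t + 1) = A t *ᵥ b t - s t)
    (hArec : ∀ t, t₀ ≤ t →
      A (t + 1) = A t - α • (H * vecMulVec (b (t + 1)) (b t) * H ^ 2))
    (hA'0 : A' t₀ = A t₀) (hb'0 : b' t₀ = 0)
    (hb'rec : ∀ t, t₀ ≤ t → b' (t + 1) = A' t₀ *ᵥ b' t - s t)
    (hA'rec : ∀ t, t₀ ≤ t →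
      A' (t + 1) = A' t - α • (H * vecMulVec (b' (t + 1)) (b' t) * H ^ 2))
    (hAnorm : specNorm (A' t₀) < 1)
    (hb'bound : ∀ t, t₀ ≤ t → evNorm (b' t) ≤ bmax) :
    ∀ Δt : ℕ,
      (Δt + 1 : ℝ) ≤ 4 / 27 * (1 - specNorm (A' t₀)) / (α * specNorm H ^ 3 * bmax ^ 2) →
      epsA t₀ A A' Δt ≤ 9 / 4 * α * specNorm H ^ 3 * bmax ^ 2 * (Δt + 1) ∧
      epsA t₀ A A' Δt ≤ 1 / 3 * (1 - specNorm (A' t₀)) := by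
  intro Δt hΔt
  set q : ℝ := specNorm (A' t₀) with hqdef
  have hq0 : 0 ≤ q := specNorm_nonneg _
  set C : ℝ := α * specNorm H ^ 3 * bmax ^ 2 with hCdef
  have hH0 : 0 ≤ specNorm H := specNorm_nonneg _
  have hC0 : 0 ≤ C := by positivity
  have hCpos : 0 < C := by
    rcases hC0.lt_or_eq with h | h
    · exact h
    · exfalso
      rw [← h, div_zero] at hΔt
      have : (0:ℝ) < (Δt : ℝ) + 1 := by positivity
      linarith
  have hkey : C * ((Δt : ℝ) + 1) ≤ 4 / 27 * (1 - q) := by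
    have := (le_div_iff₀ hCpos).mp hΔt
    linarith
  -- main induction
  have main : ∀ k : ℕ, k ≤ Δt →
      specNorm (A (t₀ + k) - A' t₀) ≤ 9 / 4 * C * k ∧
      evNorm (b (t₀ + k) - b' (t₀ + k)) ≤ bmax / 2 := by
    intro k
    induction k with
    | zero =>
      intro _
      constructor
      · rw [Nat.add_zero, ← hA'0, sub_self, specNorm_zero]
        simp
      · rw [Nat.add_zero, hb0, hb'0, sub_self]
        have : evNorm (0 : Fin n → ℝ) = 0 := by
          simp [evNorm]
        rw [this]; positivity
    | succ k ih =>
      intro hk1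
      have hk : k ≤ Δt := Nat.le_of_succ_le hk1
      obtain ⟨hDk, hek⟩ := ih hk
      set t := t₀ + k with htdef
      have ht : t₀ ≤ t := Nat.le_add_right _ _
      have ht1 : t₀ ≤ t + 1 := le_trans ht (Nat.le_succ _)
      -- D(t) ≤ (1/3)(1-q)
      have hkR : (k : ℝ) ≤ (Δt : ℝ) := Nat.cast_le.mpr hk
      have hDk' : specNorm (A t - A' t₀) ≤ 1 / 3 * (1 - q) := by
        have h1 : C * (k : ℝ) ≤ C * ((Δt : ℝ) + 1) :=
          mul_le_mul_of_nonneg_left (by linarith) hC0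
        linarith
      -- ‖b t‖ ≤ 3/2 bmax
      have hbt : evNorm (b t) ≤ 3 / 2 * bmax := by
        have h1 := hb'bound t ht
        have h2 : evNorm (b t) ≤ evNorm (b t - b' t) + evNorm (b' t) := by
          have := evNorm_add_le (b t - b' t) (b' t)
          simpa using this
        linarith
      -- e(t+1) ≤ bmax/2
      have hrec : b (t + 1) - b' (t + 1)
          = A' t₀ *ᵥ (b t - b' t) + (A t - A' t₀) *ᵥ b t := by
        rw [hbrec t ht, hb'rec t ht, Matrix.mulVec_sub, Matrix.sub_mulVec]
        abel
      have he1 : evNorm (b (t + 1) - b' (t + 1)) ≤ bmax / 2 := by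
        rw [hrec]
        have h1 := evNorm_add_le (A' t₀ *ᵥ (b t - b' t)) ((A t - A' t₀) *ᵥ b t)
        have h2 := evNorm_mulVec_le (A' t₀) (b t - b' t)
        have h3 := evNorm_mulVec_le (A t - A' t₀) (b t)
        have h4 : q * evNorm (b t - b' t) ≤ q * (bmax / 2) :=
          mul_le_mul_of_nonneg_left hek hq0
        have h5 : specNorm (A t - A' t₀) * evNorm (b t)
            ≤ (1 / 3 * (1 - q)) * (3 / 2 * bmax) := by
          apply mul_le_mul hDk' hbt (evNorm_nonneg _)
          linarith
        nlinarith
      -- ‖b (t+1)‖ ≤ 3/2 bmax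
      have hbt1 : evNorm (b (t + 1)) ≤ 3 / 2 * bmax := by
        have h1 := hb'bound (t + 1) ht1
        have h2 : evNorm (b (t + 1)) ≤ evNorm (b (t + 1) - b' (t + 1)) + evNorm (b' (t + 1)) := by
          have := evNorm_add_le (b (t + 1) - b' (t + 1)) (b' (t + 1))
          simpa using this
        linarith
      -- D(t+1)
      have hArw : A (t + 1) - A' t₀
          = (A t - A' t₀) - α • (H * vecMulVec (b (t + 1)) (b t) * H ^ 2) := by
        rw [hArec t ht]; abel
      have hDstep : specNorm (A (t + 1) - A' t₀) ≤ 9 / 4 * C * ((k : ℝ) + 1) := by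
        rw [hArw]
        have h1 := specNorm_sub_le (A t - A' t₀)
          (α • (H * vecMulVec (b (t + 1)) (b t) * H ^ 2))
        have h2 : specNorm (α • (H * vecMulVec (b (t + 1)) (b t) * H ^ 2))
            = α * specNorm (H * vecMulVec (b (t + 1)) (b t) * H ^ 2) := by
          rw [specNorm_smul, abs_of_pos hα]
        have h3 := specNorm_mul_le (H * vecMulVec (b (t + 1)) (b t)) (H ^ 2)
        have h4 := specNorm_mul_le H (vecMulVec (b (t + 1)) (b t))
        have h5 := specNorm_vecMulVec_le (b (t + 1)) (b t)
        have h6 := specNorm_sq_le H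
        have hV0 : 0 ≤ specNorm (vecMulVec (b (t + 1)) (b t)) := specNorm_nonneg _
        have hHV0 : 0 ≤ specNorm (H * vecMulVec (b (t + 1)) (b t)) := specNorm_nonneg _
        have hH2 : 0 ≤ specNorm (H ^ 2) := specNorm_nonneg _
        have hb10 : 0 ≤ evNorm (b (t + 1)) := evNorm_nonneg _
        have hbt0 : 0 ≤ evNorm (b t) := evNorm_nonneg _
        -- chain: specNorm (H * V * H²) ≤ ‖H‖ * (3/2 bmax)² * ‖H‖²
        have hchain : specNorm (H * vecMulVec (b (t + 1)) (b t) * H ^ 2)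
            ≤ specNorm H ^ 3 * (3 / 2 * bmax) ^ 2 := by
          have e1 : specNorm (H * vecMulVec (b (t + 1)) (b t))
              ≤ specNorm H * ((3 / 2 * bmax) * (3 / 2 * bmax)) := by
            have : specNorm (vecMulVec (b (t + 1)) (b t))
                ≤ (3 / 2 * bmax) * (3 / 2 * bmax) := by
              refine le_trans h5 ?_
              apply mul_le_mul hbt1 hbt hbt0 (by linarith)
            nlinarith
          calc specNorm (H * vecMulVec (b (t + 1)) (b t) * H ^ 2)
              ≤ specNorm (H * vecMulVec (b (t + 1)) (b t)) * specNorm (H ^ 2) := h3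
            _ ≤ (specNorm H * ((3 / 2 * bmax) * (3 / 2 * bmax))) * specNorm H ^ 2 := by
                apply mul_le_mul e1 h6 hH2 (by positivity)
            _ = specNorm H ^ 3 * (3 / 2 * bmax) ^ 2 := by ring
        have hfin : α * specNorm (H * vecMulVec (b (t + 1)) (b t) * H ^ 2) ≤ 9 / 4 * C := by
          have := mul_le_mul_of_nonneg_left hchain hα.le
          have heq : α * (specNorm H ^ 3 * (3 / 2 * bmax) ^ 2) = 9 / 4 * C := by
            rw [hCdef]; ring
          linarith
        have hcast : ((k + 1 : ℕ) : ℝ) = (k : ℝ) + 1 := by push_cast; ring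
        nlinarith
      refine ⟨by exact_mod_cast hDstep, he1⟩
  constructor
  · -- first bound
    apply Finset.sup'_le
    intro τ hτ
    obtain ⟨h1, h2⟩ := Finset.mem_Icc.mp hτ
    obtain ⟨k, rfl⟩ : ∃ k, τ = t₀ + k := ⟨τ - t₀, by omega⟩
    have hk : k ≤ Δt := by omega
    have hD := (main k hk).1
    have hkR : (k : ℝ) ≤ (Δt : ℝ) + 1 := by
      have : (k : ℝ) ≤ (Δt : ℝ) := Nat.cast_le.mpr hk
      linarith
    have h3 : 9 / 4 * C * (k : ℝ) ≤ 9 / 4 * C * ((Δt : ℝ) + 1) := by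
      apply mul_le_mul_of_nonneg_left hkR
      positivity
    calc specNorm (A (t₀ + k) - A' t₀) ≤ 9 / 4 * C * (k : ℝ) := hD
      _ ≤ 9 / 4 * C * ((Δt : ℝ) + 1) := h3
      _ = 9 / 4 * α * specNorm H ^ 3 * bmax ^ 2 * ((Δt : ℝ) + 1) := by rw [hCdef]; ring
  · -- second bound
    apply Finset.sup'_le
    intro τ hτ
    obtain ⟨h1, h2⟩ := Finset.mem_Icc.mp hτ
    obtain ⟨k, rfl⟩ : ∃ k, τ = t₀ + k := ⟨τ - t₀, by omega⟩
    have hk : k ≤ Δt := by omega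
    have hD := (main k hk).1
    have hkR : (k : ℝ) ≤ (Δt : ℝ) + 1 := by
      have : (k : ℝ) ≤ (Δt : ℝ) := Nat.cast_le.mpr hk
      linarith
    have h3 : 9 / 4 * C * (k : ℝ) ≤ 9 / 4 * C * ((Δt : ℝ) + 1) := by
      apply mul_le_mul_of_nonneg_left hkR
      positivity
    linarith
end
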